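/- The tracial geometric mean is symmetric: for all positive semidefinite ℓ×ℓ complex matrices X and Y, tgm(X,Y) = tgm(Y,X). -/

import Mathlib

open Matrix
open scoped ComplexOrder

namespace Matrix.PosSemidef

/-- The positive semidefinite square root, as `Matrix.PosSemidef.sqrt` was defined in the older Mathlib. -/
noncomputable def sqrt {n 𝕜 : Type*} [Fintype n] [DecidableEq n] [RCLike 𝕜] {A : Matrix n n 𝕜}
    (hA : A.PosSemidef) : Matrix n n 𝕜 :=
  (hA.1.eigenvectorUnitary : Matrix n n 𝕜) * diagonal ((↑) ∘ (√·) ∘ hA.1.eigenvalues) *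
    (star (hA.1.eigenvectorUnitary : Matrix n n 𝕜))

lemma posSemidef_sqrt {n 𝕜 : Type*} [Fintype n] [DecidableEq n] [RCLike 𝕜] {A : Matrix n n 𝕜}
    (hA : A.PosSemidef) : PosSemidef hA.sqrt := by
  apply PosSemidef.mul_mul_conjTranspose_same
  refine posSemidef_diagonal_iff.mpr fun i ↦ ?_
  rw [Function.comp_apply, RCLike.nonneg_iff]
  constructor
  · simp only [Function.comp_apply, RCLike.ofReal_re]; exact Real.sqrt_nonneg _
  · simp only [Function.comp_apply, RCLike.ofReal_im]

lemma sq_sqrt {n 𝕜 : Type*} [Fintype n] [DecidableEq n] [RCLike 𝕜] {A : Matrix n n 𝕜}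
    (hA : A.PosSemidef) : hA.sqrt ^ 2 = A := by
  have hU : (star (hA.1.eigenvectorUnitary : Matrix n n 𝕜)) *
      (hA.1.eigenvectorUnitary : Matrix n n 𝕜) = 1 :=
    (Unitary.mem_iff.mp hA.1.eigenvectorUnitary.2).1
  have hd : diagonal (((↑) ∘ (√·) ∘ hA.1.eigenvalues : n → 𝕜)) *
      diagonal ((↑) ∘ (√·) ∘ hA.1.eigenvalues) = diagonal (RCLike.ofReal ∘ hA.1.eigenvalues) := by
    rw [diagonal_mul_diagonal]
    congr 1
    funext i
    simp only [Function.comp_apply]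
    rw [← RCLike.ofReal_mul, Real.mul_self_sqrt (hA.eigenvalues_nonneg i)]
  calc hA.sqrt ^ 2 = (hA.1.eigenvectorUnitary : Matrix n n 𝕜) *
      (diagonal (((↑) ∘ (√·) ∘ hA.1.eigenvalues : n → 𝕜)) *
        ((star (hA.1.eigenvectorUnitary : Matrix n n 𝕜)) * (hA.1.eigenvectorUnitary : Matrix n n 𝕜)) *
        diagonal ((↑) ∘ (√·) ∘ hA.1.eigenvalues)) *
      (star (hA.1.eigenvectorUnitary : Matrix n n 𝕜)) := by
        rw [sq, sqrt]; simp only [Matrix.mul_assoc]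
    _ = A := by
      rw [hU, Matrix.mul_one, hd]
      exact hA.1.spectral_theorem.symm

end Matrix.PosSemidef

/-- The product `√X * Y * √X` is positive semidefinite. -/
theorem sqrt_mul_mul_sqrt_posSemidef {n : Type*} [Fintype n] [DecidableEq n]
    {X Y : Matrix n n ℂ} (hX : X.PosSemidef) (hY : Y.PosSemidef) :
    (hX.sqrt * Y * hX.sqrt).PosSemidef := by
  have h := hY.conjTranspose_mul_mul_same (B := hX.sqrt)
  rwa [hX.posSemidef_sqrt.isHermitian.eq] at h

/-- The tracial geometric mean `tgm(X,Y) = trace √(√X·Y·√X)`. -/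
noncomputable def tgm {n : Type*} [Fintype n] [DecidableEq n]
    {X Y : Matrix n n ℂ} (hX : X.PosSemidef) (hY : Y.PosSemidef) : ℝ :=
  ((sqrt_mul_mul_sqrt_posSemidef hX hY).sqrt.trace).re

section Aux

open Polynomial

variable {n : Type*} [Fintype n] [DecidableEq n]

private lemma eval_charpoly' (M : Matrix n n ℂ) (z : ℂ) :
    M.charpoly.eval z = (z • (1 : Matrix n n ℂ) - M).det := by
  rw [Matrix.charpoly, ← coe_evalRingHom, RingHom.map_det]
  congr 1
  ext i j
  by_cases h : i = j
  · subst h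
    simp [Matrix.charmatrix_apply_eq, Matrix.one_apply, Matrix.smul_apply]
  · simp [Matrix.charmatrix_apply_ne _ _ _ h, Matrix.one_apply_ne h,
      Matrix.smul_apply]

private lemma charpoly_mul_comm' (A B : Matrix n n ℂ) :
    (A * B).charpoly = (B * A).charpoly := by
  apply Polynomial.funext
  intro z
  rw [eval_charpoly', eval_charpoly']
  rcases eq_or_ne z 0 with rfl | hz
  · simp only [zero_smul, zero_sub, Matrix.det_neg, Matrix.det_mul]
    ring
  · have h1 : z • (1 : Matrix n n ℂ) - A * B = z • ((1 : Matrix n n ℂ) - (z⁻¹ • A) * B) := by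
      rw [smul_sub, Matrix.smul_mul, smul_smul, mul_inv_cancel₀ hz, one_smul]
    have h2 : z • (1 : Matrix n n ℂ) - B * A = z • ((1 : Matrix n n ℂ) - B * (z⁻¹ • A)) := by
      rw [smul_sub, Matrix.mul_smul, smul_smul, mul_inv_cancel₀ hz, one_smul]
    rw [h1, h2, Matrix.det_smul, Matrix.det_smul, Matrix.det_one_sub_mul_comm]

private lemma charpoly_eq_prod' {M : Matrix n n ℂ} (hM : M.IsHermitian) :
    M.charpoly = ∏ i, (X - C ((hM.eigenvalues i : ℝ) : ℂ)) := by
  apply Polynomial.funext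
  intro z
  have hU1 : (hM.eigenvectorUnitary : Matrix n n ℂ) *
      (star hM.eigenvectorUnitary : Matrix n n ℂ) = 1 :=
    (Unitary.mem_iff.mp hM.eigenvectorUnitary.2).2
  have key : z • (1 : Matrix n n ℂ) - M =
      (hM.eigenvectorUnitary : Matrix n n ℂ) *
        (z • (1 : Matrix n n ℂ) - diagonal (RCLike.ofReal ∘ hM.eigenvalues)) *
        (star hM.eigenvectorUnitary : Matrix n n ℂ) := by
    rw [Matrix.mul_sub, Matrix.sub_mul, Matrix.mul_smul, Matrix.mul_one,
      Matrix.smul_mul, hU1]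
    exact congrArg (z • (1 : Matrix n n ℂ) - ·) hM.spectral_theorem
  have hdet : ((hM.eigenvectorUnitary : Matrix n n ℂ)).det *
      ((star hM.eigenvectorUnitary : Matrix n n ℂ)).det = 1 := by
    rw [← Matrix.det_mul, hU1, Matrix.det_one]
  have hdiag : (z • (1 : Matrix n n ℂ) - diagonal (RCLike.ofReal ∘ hM.eigenvalues)).det
      = ∏ i, (z - ((hM.eigenvalues i : ℝ) : ℂ)) := by
    have : z • (1 : Matrix n n ℂ) - diagonal (RCLike.ofReal ∘ hM.eigenvalues)
        = diagonal (fun i => z - ((hM.eigenvalues i : ℝ) : ℂ)) := by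
      ext i j
      by_cases h : i = j
      · subst h; simp [Matrix.one_apply, Matrix.smul_apply]
      · simp [Matrix.one_apply_ne h, Matrix.diagonal_apply_ne _ h, Matrix.smul_apply]
    rw [this, Matrix.det_diagonal]
  rw [eval_charpoly', key, Matrix.det_mul, Matrix.det_mul, eval_prod]
  simp only [eval_sub, eval_X, eval_C]
  calc _ = ((hM.eigenvectorUnitary : Matrix n n ℂ)).det *
      ((star hM.eigenvectorUnitary : Matrix n n ℂ)).det *
      (z • (1 : Matrix n n ℂ) - diagonal (RCLike.ofReal ∘ hM.eigenvalues)).det := by ring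
    _ = _ := by rw [hdet, one_mul, hdiag]

private lemma trace_sqrt' {M : Matrix n n ℂ} (hM : M.PosSemidef) :
    hM.sqrt.trace = ∑ i, ((Real.sqrt (hM.1.eigenvalues i) : ℝ) : ℂ) := by
  rw [Matrix.PosSemidef.sqrt, Matrix.trace_mul_cycle,
    (Unitary.mem_iff.mp hM.1.eigenvectorUnitary.2).1, Matrix.one_mul, Matrix.trace_diagonal]
  rfl

/-- If two PSD matrices have equal charpolys, the traces of their square roots agree. -/
private lemma trace_sqrt_eq_of_charpoly_eq {M N : Matrix n n ℂ} (hM : M.PosSemidef)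
    (hN : N.PosSemidef) (h : M.charpoly = N.charpoly) :
    hM.sqrt.trace = hN.sqrt.trace := by
  set a : n → ℂ := fun i => ((hM.1.eigenvalues i : ℝ) : ℂ) with ha
  set b : n → ℂ := fun i => ((hN.1.eigenvalues i : ℝ) : ℂ) with hb
  have hprod : ∏ i, (X - C (a i)) = ∏ i, (X - C (b i)) := by
    rw [← charpoly_eq_prod' hM.1, ← charpoly_eq_prod' hN.1, h]
  have hml : ∀ c : n → ℂ, ∏ i, (X - C (c i))
      = ((Finset.univ.val.map c).map fun r => X - C r).prod := by
    intro c
    rw [Multiset.map_map, Finset.prod_eq_multiset_prod]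
    rfl
  have hroots : Finset.univ.val.map a = Finset.univ.val.map b := by
    have := congrArg Polynomial.roots hprod
    rwa [hml a, hml b, Polynomial.roots_multiset_prod_X_sub_C,
      Polynomial.roots_multiset_prod_X_sub_C] at this
  have hsum : ∀ (c : n → ℂ), (∑ i, ((Real.sqrt (c i).re : ℝ) : ℂ))
      = ((Finset.univ.val.map c).map fun z => ((Real.sqrt z.re : ℝ) : ℂ)).sum := by
    intro c
    rw [Multiset.map_map, Finset.sum_eq_multiset_sum]
    rfl
  rw [trace_sqrt' hM, trace_sqrt' hN]
  have hMre : ∀ i, hM.1.eigenvalues i = (a i).re := by intro i; simp [ha]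
  have hNre : ∀ i, hN.1.eigenvalues i = (b i).re := by intro i; simp [hb]
  calc (∑ i, ((Real.sqrt (hM.1.eigenvalues i) : ℝ) : ℂ))
      = ∑ i, ((Real.sqrt ((a i).re) : ℝ) : ℂ) := by simp_rw [hMre]
    _ = ∑ i, ((Real.sqrt ((b i).re) : ℝ) : ℂ) := by rw [hsum a, hsum b, hroots]
    _ = _ := by simp_rw [hNre]

end Aux

/-- The tracial geometric mean is symmetric: `tgm(X,Y) = tgm(Y,X)`. -/
theorem tgm_comm {ℓ : ℕ} {X Y : Matrix (Fin ℓ) (Fin ℓ) ℂ}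
    (hX : X.PosSemidef) (hY : Y.PosSemidef) :
    tgm hX hY = tgm hY hX := by
  have hXe : X = hX.sqrt * hX.sqrt := by rw [← pow_two, hX.sq_sqrt]
  have hYe : Y = hY.sqrt * hY.sqrt := by rw [← pow_two, hY.sq_sqrt]
  have hM : hX.sqrt * Y * hX.sqrt = (hX.sqrt * hY.sqrt) * (hY.sqrt * hX.sqrt) := by
    calc hX.sqrt * Y * hX.sqrt
        = hX.sqrt * (hY.sqrt * hY.sqrt) * hX.sqrt :=
          congrArg (fun Z => hX.sqrt * Z * hX.sqrt) hYe
      _ = (hX.sqrt * hY.sqrt) * (hY.sqrt * hX.sqrt) := by noncomm_ring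
  have hN : hY.sqrt * X * hY.sqrt = (hY.sqrt * hX.sqrt) * (hX.sqrt * hY.sqrt) := by
    calc hY.sqrt * X * hY.sqrt
        = hY.sqrt * (hX.sqrt * hX.sqrt) * hY.sqrt :=
          congrArg (fun Z => hY.sqrt * Z * hY.sqrt) hXe
      _ = (hY.sqrt * hX.sqrt) * (hX.sqrt * hY.sqrt) := by noncomm_ring
  have hchar : (hX.sqrt * Y * hX.sqrt).charpoly = (hY.sqrt * X * hY.sqrt).charpoly := by
    rw [hM, hN, _root_.charpoly_mul_comm']
  exact congrArg Complex.re (trace_sqrt_eq_of_charpoly_eq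
    (sqrt_mul_mul_sqrt_posSemidef hX hY) (sqrt_mul_mul_sqrt_posSemidef hY hX) hchar)
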